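/- There exists N such that for every n ≥ N the following holds. Let I₁, I₂, J₁, J₂ ⊆ {1,…,n} with |I₁| + |I₂| + |J₁| + |J₂| ≤ 40·√n. Let A, B, C ⊆ S_n with the triple (A,B,C) product-free. If |C ∩ 1_{I₁→J̄₁}| ≥ (1 − e^{−2000})·|1_{I₁→J̄₁}| and |B ∩ 1_{I₂→J̄₂}| ≥ (1 − e^{−2000})·|1_{I₂→J̄₂}|, then A is empty. -/

import Mathlib

open Equiv Finset

abbrev Perm' (n : ℕ) := Equiv.Perm (Fin n)

/-- The triple `(A,B,C)` is product-free: there are no `σ ∈ A`, `τ ∈ B` with `στ ∈ C`. -/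
def tripleProductFree {n : ℕ} (A B C : Finset (Perm' n)) : Prop :=
  ∀ σ ∈ A, ∀ τ ∈ B, σ * τ ∉ C

/-- `1_{I→J̄} = {σ ∈ Sₙ : σ(i) ∉ J for all i ∈ I}`. -/
def avoid {n : ℕ} (I J : Finset (Fin n)) : Finset (Perm' n) :=
  Finset.univ.filter fun σ => ∀ i ∈ I, σ i ∉ J


/-- Lower-bound product for counting constrained permutations: processing rows one at a
time, with `p` rows already pinned and forbidden-value counts listed in `L`. -/
def bnd (n : ℕ) : ℕ → List ℕ → ℕ
  | _, [] => 1
  | p, c :: L => (n - p - c) * bnd n (p + 1) L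

@[simp] lemma bnd_nil (n p : ℕ) : bnd n p [] = 1 := rfl

@[simp] lemma bnd_cons (n p c : ℕ) (L : List ℕ) :
    bnd n p (c :: L) = (n - p - c) * bnd n (p + 1) L := rfl

lemma bnd_append (n : ℕ) (L₁ L₂ : List ℕ) (p : ℕ) :
    bnd n p (L₁ ++ L₂) = bnd n p L₁ * bnd n (p + L₁.length) L₂ := by
  induction L₁ generalizing p with
  | nil => simp
  | cons c L ih =>
      have h : p + 1 + L.length = p + (L.length + 1) := by omega
      simp [ih, h, mul_assoc, List.length_cons]

lemma bnd_pow (n s q : ℕ) (L : List ℕ) (p : ℕ) (hc : ∀ c ∈ L, c ≤ s)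
    (hpq : p + L.length ≤ q) : (n - q - s) ^ L.length ≤ bnd n p L := by
  induction L generalizing p with
  | nil => simp
  | cons c L ih =>
      have hcc : c ≤ s := hc c (List.mem_cons_self)
      have h1 : n - q - s ≤ n - p - c := by
        have : p + L.length + 1 ≤ q := by simp only [List.length_cons] at hpq; omega
        omega
      have h2 := ih (fun x hx => hc x (List.mem_cons_of_mem _ hx)) (p := p + 1)
        (by simp only [List.length_cons] at hpq; omega)
      calc (n - q - s) ^ (c :: L).length
          = (n - q - s) * (n - q - s) ^ L.length := by
            simp [List.length_cons, pow_succ, mul_comm]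
        _ ≤ (n - p - c) * bnd n (p + 1) L := Nat.mul_le_mul h1 h2
        _ = bnd n p (c :: L) := rfl

lemma bnd_zeros (n : ℕ) (L : List ℕ) (p : ℕ) (hc : ∀ c ∈ L, c = 0)
    (hpn : p + L.length = n) : bnd n p L = (n - p).factorial := by
  induction L generalizing p with
  | nil => simp at hpn; simp [hpn]
  | cons c L ih =>
      have hcc : c = 0 := hc c (List.mem_cons_self)
      have hlt : p < n := by simp only [List.length_cons] at hpn; omega
      have h2 := ih (fun x hx => hc x (List.mem_cons_of_mem _ hx)) (p := p + 1)
        (by simp only [List.length_cons] at hpn; omega)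
      have h3 : n - p = (n - (p + 1)) + 1 := by omega
      rw [bnd_cons, h2, hcc, Nat.sub_zero, h3, Nat.factorial_succ]

lemma fact_le_pow_mul (k n : ℕ) (h : k ≤ n) :
    n.factorial ≤ n ^ k * (n - k).factorial := by
  induction k with
  | zero => simp
  | succ m ih =>
      have h1 := ih (by omega)
      have h2 : (n - m).factorial = (n - m) * (n - (m + 1)).factorial := by
        have hh : n - m = (n - (m + 1)) + 1 := by omega
        rw [hh, Nat.factorial_succ]
      calc n.factorial ≤ n ^ m * (n - m).factorial := h1
        _ = n ^ m * ((n - m) * (n - (m + 1)).factorial) := by rw [h2]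
        _ ≤ n ^ m * (n * (n - (m + 1)).factorial) := by
            exact Nat.mul_le_mul_left _ (Nat.mul_le_mul_right _ (Nat.sub_le _ _))
        _ = n ^ (m + 1) * (n - (m + 1)).factorial := by ring

lemma core (n : ℕ) (F : Fin n → Finset (Fin n)) (L : List (Fin n)) :
    ∀ (I : Finset (Fin n)) (g : Fin n → Fin n),
    L.Nodup → (∀ a ∈ L, a ∉ I) → (∀ x : Fin n, x ∈ I ∨ x ∈ L) →
    Set.InjOn g ↑I →
    bnd n I.card (L.map fun a => (F a).card) ≤
      (Finset.univ.filter fun σ : Perm' n =>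
        (∀ i ∈ I, σ i = g i) ∧ ∀ i ∈ L, σ i ∉ F i).card := by
  induction L with
  | nil =>
      intro I g _ _ hcov hinj
      have hI : ∀ x, x ∈ I := fun x => (hcov x).resolve_right (by simp)
      have hg : Function.Injective g := fun x y hxy =>
        hinj (Finset.mem_coe.mpr (hI x)) (Finset.mem_coe.mpr (hI y)) hxy
      have hb : Function.Bijective g := Finite.injective_iff_bijective.mp hg
      have hmem : (Equiv.ofBijective g hb) ∈ Finset.univ.filter
          (fun σ : Perm' n => (∀ i ∈ I, σ i = g i) ∧ ∀ i ∈ ([] : List (Fin n)), σ i ∉ F i) := by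
        simp [Equiv.ofBijective]
      calc bnd n I.card (([] : List (Fin n)).map fun a => (F a).card) = 1 := rfl
        _ ≤ _ := Finset.card_pos.mpr ⟨_, hmem⟩
  | cons a L ih =>
      intro I g hnd ha hcov hinj
      have haI : a ∉ I := ha a (List.mem_cons_self)
      set S := Finset.univ.filter (fun σ : Perm' n =>
          (∀ i ∈ I, σ i = g i) ∧ ∀ i ∈ a :: L, σ i ∉ F i) with hS
      set T := Finset.univ \ (I.image g ∪ F a) with hT
      have hmap : ∀ σ ∈ S, σ a ∈ T := by
        intro σ hσ
        simp only [hS, Finset.mem_filter] at hσ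
        obtain ⟨-, h1, h2⟩ := hσ
        simp only [hT, Finset.mem_sdiff, Finset.mem_univ, true_and, Finset.mem_union, not_or]
        refine ⟨?_, h2 a (List.mem_cons_self)⟩
        intro hmem
        obtain ⟨i, hiI, hgi⟩ := Finset.mem_image.mp hmem
        have hia : i = a := σ.injective (by rw [h1 i hiI, hgi])
        exact haI (hia ▸ hiI)
      have hcard := Finset.card_eq_sum_card_fiberwise hmap
      have hfib : ∀ j ∈ T, bnd n (I.card + 1) (L.map fun a => (F a).card)
          ≤ (S.filter fun σ => σ a = j).card := by
        intro j hj
        simp only [hT, Finset.mem_sdiff, Finset.mem_union, not_or] at hj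
        obtain ⟨-, hjim, hjF⟩ := hj
        have hfil : (S.filter fun σ => σ a = j) = Finset.univ.filter
            (fun σ : Perm' n =>
              (∀ i ∈ insert a I, σ i = Function.update g a j i) ∧ ∀ i ∈ L, σ i ∉ F i) := by
          ext σ
          simp only [hS, Finset.mem_filter, Finset.mem_univ, true_and, Finset.mem_insert,
            List.mem_cons]
          constructor
          · rintro ⟨⟨h1, h2⟩, h3⟩
            refine ⟨fun i hi => ?_, fun i hi => h2 i (Or.inr hi)⟩
            rcases hi with rfl | hi
            · rw [Function.update_self]; exact h3
            · rw [Function.update_of_ne (fun h : i = a => haI (h ▸ hi))]; exact h1 i hi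
          · rintro ⟨h1, h2⟩
            have hσa : σ a = j := by
              have := h1 a (Or.inl rfl); rwa [Function.update_self] at this
            refine ⟨⟨fun i hi => ?_, fun i hi => ?_⟩, hσa⟩
            · have := h1 i (Or.inr hi)
              rwa [Function.update_of_ne (fun h : i = a => haI (h ▸ hi))] at this
            · rcases hi with rfl | hi
              · rw [hσa]; exact hjF
              · exact h2 i hi
        have hinj' : Set.InjOn (Function.update g a j) ↑(insert a I) := by
          intro x hx y hy hxy
          simp only [Finset.coe_insert, Set.mem_insert_iff, Finset.mem_coe] at hx hy
          rcases hx with rfl | hx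
          · rcases hy with rfl | hy
            · rfl
            · exfalso
              rw [Function.update_self,
                Function.update_of_ne (fun h : y = x => haI (h ▸ hy))] at hxy
              exact hjim (Finset.mem_image.mpr ⟨y, hy, hxy.symm⟩)
          · rcases hy with rfl | hy
            · exfalso
              rw [Function.update_self,
                Function.update_of_ne (fun h : x = y => haI (h ▸ hx))] at hxy
              exact hjim (Finset.mem_image.mpr ⟨x, hx, hxy⟩)
            · rw [Function.update_of_ne (fun h : x = a => haI (h ▸ hx)),
                Function.update_of_ne (fun h : y = a => haI (h ▸ hy))] at hxy
              exact hinj hx hy hxy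
        have hnd' : L.Nodup := (List.nodup_cons.mp hnd).2
        have haL : a ∉ L := (List.nodup_cons.mp hnd).1
        have ha' : ∀ b ∈ L, b ∉ insert a I := by
          intro b hb
          simp only [Finset.mem_insert, not_or]
          exact ⟨fun h => haL (h ▸ hb), ha b (List.mem_cons_of_mem _ hb)⟩
        have hcov' : ∀ x : Fin n, x ∈ insert a I ∨ x ∈ L := by
          intro x
          rcases hcov x with hx | hx
          · exact Or.inl (Finset.mem_insert_of_mem hx)
          · rcases List.mem_cons.mp hx with rfl | hx
            · exact Or.inl (Finset.mem_insert_self _ _)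
            · exact Or.inr hx
        have := ih (insert a I) (Function.update g a j) hnd' ha' hcov' hinj'
        rw [Finset.card_insert_of_notMem haI] at this
        rw [hfil]
        exact this
      have hTcard : n - I.card - (F a).card ≤ T.card := by
        have h1 : (I.image g ∪ F a).card ≤ I.card + (F a).card :=
          le_trans (Finset.card_union_le _ _)
            (Nat.add_le_add_right Finset.card_image_le _)
        have h2 : T.card = n - (I.image g ∪ F a).card := by
          rw [hT, Finset.card_sdiff_of_subset (Finset.subset_univ _), Finset.card_univ, Fintype.card_fin]
        omega
      calc bnd n I.card ((a :: L).map fun a => (F a).card)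
          = (n - I.card - (F a).card) * bnd n (I.card + 1) (L.map fun a => (F a).card) := rfl
        _ ≤ T.card * bnd n (I.card + 1) (L.map fun a => (F a).card) :=
            Nat.mul_le_mul_right _ hTcard
        _ ≤ ∑ j ∈ T, (S.filter fun σ => σ a = j).card := by
            simpa [smul_eq_mul] using Finset.card_nsmul_le_sum T _ _ hfib
        _ = S.card := hcard.symm

lemma count_avoid (n : ℕ) (K : Finset (Fin n)) (F : Fin n → Finset (Fin n)) (s : ℕ)
    (hF : ∀ i ∈ K, (F i).card ≤ s) :
    (n - s - K.card) ^ K.card * (n - K.card).factorial ≤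
      (Finset.univ.filter fun σ : Perm' n => ∀ i ∈ K, σ i ∉ F i).card := by
  classical
  set F' : Fin n → Finset (Fin n) := fun i => if i ∈ K then F i else ∅ with hF'
  set L : List (Fin n) := Finset.sort K (· ≤ ·) ++ Finset.sort Kᶜ (· ≤ ·) with hL
  have hmemL : ∀ x : Fin n, x ∈ L := by
    intro x; rw [hL, List.mem_append]
    by_cases hx : x ∈ K
    · exact Or.inl ((Finset.mem_sort _).mpr hx)
    · exact Or.inr ((Finset.mem_sort _).mpr (Finset.mem_compl.mpr hx))
  have hnd : L.Nodup := by
    rw [hL]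
    refine List.Nodup.append (Finset.sort_nodup _ _) (Finset.sort_nodup _ _) ?_
    intro x hx1 hx2
    exact (Finset.mem_compl.mp ((Finset.mem_sort _).mp hx2)) ((Finset.mem_sort _).mp hx1)
  have hcore := core n F' L ∅ id hnd (by simp) (fun x => Or.inr (hmemL x))
    (by simp)
  have hsets : (Finset.univ.filter fun σ : Perm' n =>
      (∀ i ∈ (∅ : Finset (Fin n)), σ i = id i) ∧ ∀ i ∈ L, σ i ∉ F' i) =
      (Finset.univ.filter fun σ : Perm' n => ∀ i ∈ K, σ i ∉ F i) := by
    ext σ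
    simp only [Finset.mem_filter, Finset.mem_univ, true_and, Finset.notMem_empty,
      false_implies, implies_true, true_and]
    constructor
    · intro h i hi
      have := h i (hmemL i)
      simp only [hF'] at this
      rwa [if_pos hi] at this
    · intro h i _
      simp only [hF']
      by_cases hiK : i ∈ K
      · rw [if_pos hiK]; exact h i hiK
      · simp [hiK]
  have hkn : K.card ≤ n := by
    have := Finset.card_le_univ K
    simpa using this
  have hlen1 : ((Finset.sort K (· ≤ ·)).map fun a => (F' a).card).length = K.card := by
    simp [Finset.length_sort]
  have h1 : (n - s - K.card) ^ K.card ≤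
      bnd n 0 ((Finset.sort K (· ≤ ·)).map fun a => (F' a).card) := by
    have hb := bnd_pow n s K.card ((Finset.sort K (· ≤ ·)).map fun a => (F' a).card) 0
      (by
        intro c hc
        obtain ⟨a, ha, rfl⟩ := List.mem_map.mp hc
        have haK : a ∈ K := (Finset.mem_sort _).mp ha
        simp only [hF', if_pos haK]
        exact hF a haK)
      (by rw [hlen1]; omega)
    rw [hlen1] at hb
    have hsub : n - K.card - s = n - s - K.card := by omega
    rwa [hsub] at hb
  have h2 : bnd n (0 + ((Finset.sort K (· ≤ ·)).map fun a => (F' a).card).length)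
      ((Finset.sort Kᶜ (· ≤ ·)).map fun a => (F' a).card) = (n - K.card).factorial := by
    rw [hlen1, zero_add]
    apply bnd_zeros
    · intro c hc
      obtain ⟨a, ha, rfl⟩ := List.mem_map.mp hc
      have haK : a ∉ K := Finset.mem_compl.mp ((Finset.mem_sort _).mp ha)
      simp [hF', haK]
    · simp only [List.length_map, Finset.length_sort, Finset.card_compl, Fintype.card_fin]
      omega
  have hbnd : (n - s - K.card) ^ K.card * (n - K.card).factorial ≤
      bnd n (∅ : Finset (Fin n)).card (L.map fun a => (F' a).card) := by
    rw [Finset.card_empty, hL, List.map_append, bnd_append]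
    exact Nat.mul_le_mul h1 (le_of_eq h2.symm)
  calc (n - s - K.card) ^ K.card * (n - K.card).factorial
      ≤ _ := hbnd
    _ ≤ _ := hcore
    _ = _ := congrArg Finset.card hsets

set_option maxHeartbeats 1000000 in
/-- If `(A,B,C)` is a product-free triple in `Sₙ`, `|I₁|+|I₂|+|J₁|+|J₂| ≤ 40√n`, and
`C`, `B` occupy at least a `(1 - e^(-2000))`-fraction of `1_{I₁→J̄₁}`, `1_{I₂→J̄₂}`
respectively, then `A` is empty (for `n` sufficiently large). -/
theorem product_free_triple_with_two_huge_sets_is_trivial :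
    ∃ N : ℕ, ∀ n : ℕ, N ≤ n →
    ∀ I₁ I₂ J₁ J₂ : Finset (Fin n),
    (I₁.card + I₂.card + J₁.card + J₂.card : ℝ) ≤ 40 * Real.sqrt n →
    ∀ A B C : Finset (Perm' n), tripleProductFree A B C →
    (1 - Real.exp (-2000)) * ((avoid I₁ J₁).card : ℝ) ≤ ((C ∩ avoid I₁ J₁).card : ℝ) →
    (1 - Real.exp (-2000)) * ((avoid I₂ J₂).card : ℝ) ≤ ((B ∩ avoid I₂ J₂).card : ℝ) →
    A = ∅ := by
  classical
  use 16384000000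
  intro n hn I₁ I₂ J₁ J₂ hsize A B C hPF hC hB
  by_contra hA
  obtain ⟨σ, hσ⟩ := Finset.nonempty_iff_ne_empty.mpr hA
  set ε := Real.exp (-2000) with hε
  have hε0 : 0 < ε := Real.exp_pos _
  -- basic facts about n and r = √n
  set r := Real.sqrt n with hrdef
  have hn' : (16384000000 : ℝ) ≤ (n : ℝ) := by exact_mod_cast hn
  have hr : (128000 : ℝ) ≤ r := by
    have h1 : (128000 : ℝ) = Real.sqrt (128000 ^ 2) := (Real.sqrt_sq (by norm_num)).symm
    rw [h1, hrdef]
    exact Real.sqrt_le_sqrt (by norm_num; linarith)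
  have hr0 : (0 : ℝ) < r := by linarith
  have hnr : (n : ℝ) = r * r := (Real.mul_self_sqrt (Nat.cast_nonneg n)).symm
  -- the combined avoidance set W
  set J' : Finset (Fin n) := J₁.image ⇑(σ⁻¹) with hJ'
  set K : Finset (Fin n) := I₁ ∪ I₂ with hK
  set F : Fin n → Finset (Fin n) :=
    fun i => (if i ∈ I₁ then J' else ∅) ∪ (if i ∈ I₂ then J₂ else ∅) with hFdef
  set W : Finset (Perm' n) :=
    Finset.univ.filter (fun τ : Perm' n => ∀ i ∈ K, τ i ∉ F i) with hW
  set s := J₁.card + J₂.card with hs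
  set k := K.card with hk
  have hcardPerm : Fintype.card (Perm' n) = n.factorial := by
    simp [Fintype.card_perm]
  have hDle : ((avoid I₁ J₁).card : ℝ) ≤ (n.factorial : ℝ) := by
    have h := Finset.card_le_univ (avoid I₁ J₁)
    rw [hcardPerm] at h
    exact_mod_cast h
  have hEle : ((avoid I₂ J₂).card : ℝ) ≤ (n.factorial : ℝ) := by
    have h := Finset.card_le_univ (avoid I₂ J₂)
    rw [hcardPerm] at h
    exact_mod_cast h
  -- upper bound on |W|
  have keyD : (((avoid I₁ J₁) \ C).card : ℝ) ≤ ε * (n.factorial : ℝ) := by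
    have h1 := Finset.card_inter_add_card_sdiff (avoid I₁ J₁) C
    have h2 : (avoid I₁ J₁ ∩ C).card = (C ∩ avoid I₁ J₁).card := by rw [Finset.inter_comm]
    rw [h2] at h1
    have h1' : ((C ∩ avoid I₁ J₁).card : ℝ) + (((avoid I₁ J₁) \ C).card : ℝ)
        = ((avoid I₁ J₁).card : ℝ) := by exact_mod_cast h1
    nlinarith [mul_le_mul_of_nonneg_left hDle hε0.le]
  have keyE : (((avoid I₂ J₂) \ B).card : ℝ) ≤ ε * (n.factorial : ℝ) := by
    have h1 := Finset.card_inter_add_card_sdiff (avoid I₂ J₂) B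
    have h2 : (avoid I₂ J₂ ∩ B).card = (B ∩ avoid I₂ J₂).card := by rw [Finset.inter_comm]
    rw [h2] at h1
    have h1' : ((B ∩ avoid I₂ J₂).card : ℝ) + (((avoid I₂ J₂) \ B).card : ℝ)
        = ((avoid I₂ J₂).card : ℝ) := by exact_mod_cast h1
    nlinarith [mul_le_mul_of_nonneg_left hEle hε0.le]
  have hWmulD : ∀ τ ∈ W, σ * τ ∈ avoid I₁ J₁ := by
    intro τ hτ
    simp only [hW, Finset.mem_filter, Finset.mem_univ, true_and] at hτ
    simp only [avoid, Finset.mem_filter, Finset.mem_univ, true_and]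
    intro i hi hmem
    have h1 : τ i ∈ J' := by
      rw [hJ']
      exact Finset.mem_image.mpr ⟨(σ * τ) i, hmem, by simp [Equiv.Perm.mul_apply]⟩
    exact hτ i (Finset.mem_union_left _ hi)
      (Finset.mem_union_left _ (by rw [if_pos hi]; exact h1))
  have hWsubE : W ⊆ avoid I₂ J₂ := by
    intro τ hτ
    simp only [hW, Finset.mem_filter, Finset.mem_univ, true_and] at hτ
    simp only [avoid, Finset.mem_filter, Finset.mem_univ, true_and]
    intro i hi hmem
    exact hτ i (Finset.mem_union_right _ hi)
      (Finset.mem_union_right _ (by rw [if_pos hi]; exact hmem))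
  have hWB : (W ∩ B).card ≤ ((avoid I₁ J₁) \ C).card := by
    apply Finset.card_le_card_of_injOn (fun τ => σ * τ)
    · intro τ hτ
      rw [Finset.mem_coe, Finset.mem_inter] at hτ
      rw [Finset.mem_coe, Finset.mem_sdiff]
      exact ⟨hWmulD τ hτ.1, hPF σ hσ τ hτ.2⟩
    · intro x _ y _ h
      exact mul_left_cancel h
  have hWB2 : (W \ B).card ≤ ((avoid I₂ J₂) \ B).card :=
    Finset.card_le_card (Finset.sdiff_subset_sdiff hWsubE Finset.Subset.rfl)
  have c1 : (W.card : ℝ) ≤ 2 * ε * (n.factorial : ℝ) := by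
    have h0 := Finset.card_inter_add_card_sdiff W B
    have h0' : ((W ∩ B).card : ℝ) + ((W \ B).card : ℝ) = (W.card : ℝ) := by exact_mod_cast h0
    have e1 : ((W ∩ B).card : ℝ) ≤ ε * (n.factorial : ℝ) :=
      le_trans (by exact_mod_cast hWB) keyD
    have e2 : ((W \ B).card : ℝ) ≤ ε * (n.factorial : ℝ) :=
      le_trans (by exact_mod_cast hWB2) keyE
    linarith
  -- lower bound on |W|
  have hFs : ∀ i ∈ K, (F i).card ≤ s := by
    intro i _
    calc (F i).card ≤ (if i ∈ I₁ then J' else ∅).card + (if i ∈ I₂ then J₂ else ∅).card := by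
          rw [hFdef]; exact Finset.card_union_le _ _
      _ ≤ J₁.card + J₂.card := by
          apply add_le_add
          · split
            · rw [hJ']
              exact le_of_eq (Finset.card_image_of_injective _ (Equiv.injective _))
            · simp
          · split
            · exact le_rfl
            · simp
  have hWlow : (n - s - k) ^ k * (n - k).factorial ≤ W.card := by
    rw [hW, hk]
    exact count_avoid n K F s hFs
  have hkn : k ≤ n := by
    have := Finset.card_le_univ K
    simpa [hk] using this
  -- real estimates
  have hks : (k : ℝ) + (s : ℝ) ≤ 40 * r := by
    have h1 : (k : ℝ) ≤ (I₁.card : ℝ) + (I₂.card : ℝ) := by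
      rw [hk, hK]; exact_mod_cast Finset.card_union_le I₁ I₂
    rw [hs]
    push_cast
    push_cast at hsize
    linarith
  have hskn : s + k ≤ n := by
    have h40 : 40 * r ≤ (n : ℝ) := by
      have hh := mul_le_mul_of_nonneg_right hr hr0.le
      rw [hnr]; linarith
    have : ((s + k : ℕ) : ℝ) ≤ (n : ℝ) := by push_cast; linarith
    exact_mod_cast this
  set t : ℝ := 40 / r with htdef
  have ht0 : 0 ≤ t := by positivity
  have ht2 : t ≤ 1 / 2 := by
    rw [htdef, div_le_iff₀ hr0]; linarith
  set b : ℝ := 1 - t with hbdef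
  have hb0 : 0 ≤ b := by rw [hbdef]; linarith
  have hexpb : Real.exp (-(t + 2 * t ^ 2)) ≤ b := by
    rw [Real.exp_neg, inv_eq_one_div, div_le_iff₀ (Real.exp_pos _)]
    nlinarith [Real.add_one_le_exp (t + 2 * t ^ 2), sq_nonneg t,
      mul_nonneg (mul_nonneg ht0 ht0) (by linarith : (0:ℝ) ≤ 1 - 2 * t),
      mul_le_mul_of_nonneg_left (Real.add_one_le_exp (t + 2 * t ^ 2)) hb0]
  have hbk : Real.exp (-1601) ≤ b ^ k := by
    have h1 : Real.exp (-(t + 2 * t ^ 2)) ^ k ≤ b ^ k :=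
      pow_le_pow_left₀ (Real.exp_pos _).le hexpb k
    have h2 : Real.exp (-(t + 2 * t ^ 2)) ^ k = Real.exp (-(k * (t + 2 * t ^ 2))) := by
      rw [← Real.exp_nat_mul]; ring_nf
    have hk40 : (k : ℝ) ≤ 40 * r := by
      have : (0:ℝ) ≤ s := Nat.cast_nonneg s
      linarith
    have h3 : (k : ℝ) * (t + 2 * t ^ 2) ≤ 1601 := by
      have hmul : (k : ℝ) * (t + 2 * t ^ 2) ≤ (40 * r) * (t + 2 * t ^ 2) :=
        mul_le_mul_of_nonneg_right hk40 (by positivity)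
      have heq : (40 * r) * (t + 2 * t ^ 2) = 1600 + 128000 / r := by
        rw [htdef]; field_simp; ring
      have hsmall : 128000 / r ≤ 1 := by
        rw [div_le_one hr0]; linarith
      linarith
    calc Real.exp (-1601) ≤ Real.exp (-(k * (t + 2 * t ^ 2))) :=
          Real.exp_le_exp.mpr (by linarith)
      _ = Real.exp (-(t + 2 * t ^ 2)) ^ k := h2.symm
      _ ≤ b ^ k := h1
  have hnk : ((n - (s + k) : ℕ) : ℝ) = (n : ℝ) - ((s : ℝ) + (k : ℝ)) := by
    rw [Nat.cast_sub hskn]; push_cast; ring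
  have hnb : (n : ℝ) * b ≤ ((n - (s + k) : ℕ) : ℝ) := by
    rw [hnk]
    have h1 : (n : ℝ) * b = (n : ℝ) - 40 * r := by
      rw [hbdef, htdef, hnr]; field_simp
    rw [h1]; linarith
  have hnb0 : (0 : ℝ) ≤ (n : ℝ) * b := by positivity
  -- final chain
  have hn0 : (0 : ℝ) < (n : ℝ) := by linarith
  have hsubeq : n - s - k = n - (s + k) := by omega
  have e1 : (((n - (s + k) : ℕ) : ℝ)) ^ k * (((n - k).factorial : ℕ) : ℝ) ≤ (W.card : ℝ) := by
    rw [← hsubeq]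
    exact_mod_cast hWlow
  have e2 : ((n : ℝ) * b) ^ k * (((n - k).factorial : ℕ) : ℝ)
      ≤ (((n - (s + k) : ℕ) : ℝ)) ^ k * (((n - k).factorial : ℕ) : ℝ) := by
    apply mul_le_mul_of_nonneg_right (pow_le_pow_left₀ hnb0 hnb k) (Nat.cast_nonneg _)
  have e3 : (n : ℝ) ^ k * Real.exp (-1601) * (((n - k).factorial : ℕ) : ℝ)
      ≤ ((n : ℝ) * b) ^ k * (((n - k).factorial : ℕ) : ℝ) := by
    rw [mul_pow]
    apply mul_le_mul_of_nonneg_right _ (Nat.cast_nonneg _)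
    exact mul_le_mul_of_nonneg_left hbk (by positivity)
  have e5 : 2 * ε < Real.exp (-1601) := by
    have h1 : Real.exp (-1601) = Real.exp 399 * Real.exp (-2000) := by
      rw [← Real.exp_add]; norm_num
    have h2 : (400 : ℝ) ≤ Real.exp 399 := by
      have := Real.add_one_le_exp (399 : ℝ); linarith
    rw [hε, h1]
    nlinarith [Real.exp_pos (-2000 : ℝ)]
  have hfacpos : (0 : ℝ) < (((n - k).factorial : ℕ) : ℝ) := by
    exact_mod_cast Nat.factorial_pos (n - k)
  have hnkpos : (0 : ℝ) < (n : ℝ) ^ k * (((n - k).factorial : ℕ) : ℝ) := by positivity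
  have e6 : ((n.factorial : ℕ) : ℝ) ≤ (n : ℝ) ^ k * (((n - k).factorial : ℕ) : ℝ) := by
    exact_mod_cast fact_le_pow_mul k n hkn
  have hfinal : 2 * ε * ((n.factorial : ℕ) : ℝ) < (W.card : ℝ) := by
    calc 2 * ε * ((n.factorial : ℕ) : ℝ)
        ≤ 2 * ε * ((n : ℝ) ^ k * (((n - k).factorial : ℕ) : ℝ)) := by
          apply mul_le_mul_of_nonneg_left e6 (by positivity)
      _ < Real.exp (-1601) * ((n : ℝ) ^ k * (((n - k).factorial : ℕ) : ℝ)) :=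
          mul_lt_mul_of_pos_right e5 hnkpos
      _ = (n : ℝ) ^ k * Real.exp (-1601) * (((n - k).factorial : ℕ) : ℝ) := by ring
      _ ≤ ((n : ℝ) * b) ^ k * (((n - k).factorial : ℕ) : ℝ) := e3
      _ ≤ (((n - (s + k) : ℕ) : ℝ)) ^ k * (((n - k).factorial : ℕ) : ℝ) := e2
      _ ≤ (W.card : ℝ) := e1
  linarith
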